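/- For every integer k ≥ 1 and every r ∈ ℤ/nℤ, the alternating sum Σ_{i=0}^{k} (−1)^i · e_i^{(r−i)}(x_1,…,x_m) · h_{k−i}^{(r−i−1)}(x_1,…,x_m) equals 0 in the polynomial ring. -/

import Mathlib

noncomputable section

open Finset MvPolynomial

open Classical in
/-- Loop elementary symmetric function `e_k^{(s)}(x_1, …, x_m)`; zero for `k < 0` (and
automatically zero for `k > m`).  The variable `x_i^{(s)}` is `X (i-1, s)`. -/
def lE (n m : ℕ) (k : ℤ) (s : ZMod n) : MvPolynomial (Fin m × ZMod n) ℤ :=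
  if 0 ≤ k then
    ∑ f ∈ Finset.univ.filter (fun f : Fin k.toNat → Fin m => StrictMono f),
      ∏ j : Fin k.toNat, MvPolynomial.X (f j, s + ((j : ℕ) : ZMod n))
  else 0

open Classical in
/-- Loop complete homogeneous symmetric function `h_k^{(s)}(x_1, …, x_m)`; zero for `k < 0`. -/
def lH (n m : ℕ) (k : ℤ) (s : ZMod n) : MvPolynomial (Fin m × ZMod n) ℤ :=
  if 0 ≤ k then
    ∑ f ∈ Finset.univ.filter (fun f : Fin k.toNat → Fin m => Monotone f),
      ∏ j : Fin k.toNat, MvPolynomial.X (f j, s - ((j : ℕ) : ZMod n))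
  else 0


def LoopValid (m k i : ℕ) (a : Fin k → Fin m) : Prop :=
  (∀ j1 j2 : Fin k, (j1:ℕ) < (j2:ℕ) → (j2:ℕ) < i → a j2 < a j1) ∧
  (∀ j1 j2 : Fin k, i ≤ (j1:ℕ) → j1 ≤ j2 → a j1 ≤ a j2)

lemma loopValid_zero_one {m k : ℕ} {a : Fin k → Fin m} (h : LoopValid m k 0 a) :
    LoopValid m k 1 a :=
  ⟨fun j1 j2 h12 h2 => absurd (Nat.lt_trans h12 h2) (by omega),
   fun j1 j2 _ h12 => h.2 j1 j2 (Nat.zero_le _) h12⟩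

lemma loopValid_top {m k : ℕ} {a : Fin k → Fin m} (h : LoopValid m k k a) :
    LoopValid m k (k-1) a := by
  refine ⟨fun j1 j2 h12 h2 => h.1 j1 j2 h12 j2.isLt, fun j1 j2 h1 h12 => ?_⟩
  have : j1 = j2 := Fin.ext (by have := j2.isLt; have := Fin.le_def.mp h12; omega)
  exact this ▸ le_refl _

lemma loopValid_not_both {m k i : ℕ} {a : Fin k → Fin m} (hik : i + 1 < k)
    (h1 : LoopValid m k i a) (h2 : LoopValid m k (i+2) a) : False := by
  have hlt : a ⟨i+1, hik⟩ < a ⟨i, by omega⟩ :=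
    h2.1 ⟨i, by omega⟩ ⟨i+1, hik⟩ (by simp) (by simp)
  have hle : a ⟨i, by omega⟩ ≤ a ⟨i+1, hik⟩ :=
    h1.2 _ _ (le_refl i) (Fin.le_def.mpr (by simp))
  exact absurd hle (not_le.mpr hlt)

lemma loopValid_pred {m k i : ℕ} {a : Fin k → Fin m} (hi : 1 ≤ i) (hik : i < k)
    (h : LoopValid m k i a) (hn : ¬ LoopValid m k (i+1) a) : LoopValid m k (i-1) a := by
  -- the second component of `LoopValid (i+1)` holds, so the first fails
  have hsnd : ∀ j1 j2 : Fin k, i+1 ≤ (j1:ℕ) → j1 ≤ j2 → a j1 ≤ a j2 :=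
    fun j1 j2 h1 h12 => h.2 j1 j2 (by omega) h12
  have hfst : ¬ (∀ j1 j2 : Fin k, (j1:ℕ) < (j2:ℕ) → (j2:ℕ) < i+1 → a j2 < a j1) := by
    intro hf; exact hn ⟨hf, hsnd⟩
  push_neg at hfst
  obtain ⟨j1, j2, hj12, hj2, hge⟩ := hfst
  have hj2i : (j2:ℕ) = i := by
    by_contra hne
    exact absurd (h.1 j1 j2 hj12 (by omega)) (not_lt.mpr hge)
  set ii : Fin k := ⟨i, hik⟩ with hii
  have hj2ii : j2 = ii := Fin.ext hj2i
  -- key: a ⟨i-1⟩ ≤ a ii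
  have hkey : a ⟨i-1, by omega⟩ ≤ a ii := by
    rcases Nat.lt_or_ge (j1:ℕ) (i-1) with hc | hc
    · have h1 : a ⟨i-1, by omega⟩ < a j1 :=
        h.1 j1 ⟨i-1, by omega⟩ hc (show i - 1 < i by omega)
      exact le_trans h1.le (hj2ii ▸ hge)
    · have : j1 = (⟨i-1, by omega⟩ : Fin k) := Fin.ext (show (j1:ℕ) = i - 1 by omega)
      exact this ▸ (hj2ii ▸ hge)
  refine ⟨fun p q hpq hq => h.1 p q hpq (by omega), fun p q hp hpq => ?_⟩
  rcases Nat.lt_or_ge (q:ℕ) i with hq | hq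
  · have : p = q := Fin.ext (by have := Fin.le_def.mp hpq; omega)
    exact this ▸ le_refl _
  rcases Nat.lt_or_ge (p:ℕ) i with hcp | hcp
  · have hpe : p = (⟨i-1, by omega⟩ : Fin k) := Fin.ext (show (p:ℕ) = i - 1 by omega)
    calc a p ≤ a ii := hpe ▸ hkey
      _ ≤ a q := h.2 ii q (le_refl _) (Fin.le_def.mpr (show i ≤ (q:ℕ) from hq))
  · exact h.2 p q hcp hpq

open Classical in
lemma loopValid_sign_sum {R : Type*} [Ring R] [Nontrivial R] (m k : ℕ) (hk : 1 ≤ k)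
    (a : Fin k → Fin m) :
    ∑ i ∈ (Finset.range (k+1)).filter (fun i => LoopValid m k i a), (-1 : R) ^ i = 0 := by
  refine Finset.sum_involution
    (fun i _ => if i < k ∧ LoopValid m k (i+1) a then i+1 else i-1) ?_ ?_ ?_ ?_
  · -- signs cancel
    intro i hi
    simp only [mem_filter, mem_range] at hi
    by_cases hc : i < k ∧ LoopValid m k (i+1) a
    · rw [if_pos hc, pow_succ, mul_neg_one, add_neg_cancel]
    · rw [if_neg hc]
      have hi1 : 1 ≤ i := by
        by_contra hi0
        have : i = 0 := by omega
        subst this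
        exact hc ⟨by omega, loopValid_zero_one hi.2⟩
      obtain ⟨j, rfl⟩ : ∃ j, i = j + 1 := ⟨i - 1, by omega⟩
      simp only [Nat.add_sub_cancel, pow_succ, mul_neg_one]
      exact neg_add_cancel _
  · -- g i ≠ i
    intro i hi _
    by_cases hc : i < k ∧ LoopValid m k (i+1) a
    · simp [hc]
    · simp only [if_neg hc]
      simp only [mem_filter, mem_range] at hi
      have hi1 : 1 ≤ i := by
        by_contra hi0
        have : i = 0 := by omega
        subst this
        exact hc ⟨by omega, loopValid_zero_one hi.2⟩
      omega
  · -- membership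
    intro i hi
    simp only [mem_filter, mem_range] at hi ⊢
    by_cases hc : i < k ∧ LoopValid m k (i+1) a
    · rw [if_pos hc]; exact ⟨by omega, hc.2⟩
    · rw [if_neg hc]
      push_neg at hc
      rcases Nat.lt_or_ge i k with hik | hik
      · have hnv := hc hik
        have hi1 : 1 ≤ i := by
          by_contra hi0
          have : i = 0 := by omega
          subst this
          exact hnv (loopValid_zero_one hi.2)
        exact ⟨by omega, loopValid_pred hi1 hik hi.2 hnv⟩
      · have : i = k := by omega
        subst this
        exact ⟨by omega, loopValid_top hi.2⟩
  · -- involution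
    intro i hi
    simp only [mem_filter, mem_range] at hi
    by_cases hc : i < k ∧ LoopValid m k (i+1) a
    · rw [if_pos hc]
      have : ¬ (i + 1 < k ∧ LoopValid m k (i+2) a) := by
        rintro ⟨h1, h2⟩
        exact loopValid_not_both h1 hi.2 h2
      rw [if_neg this]
      omega
    · rw [if_neg hc]
      push_neg at hc
      rcases Nat.lt_or_ge i k with hik | hik
      · have hnv := hc hik
        have hi1 : 1 ≤ i := by
          by_contra hi0
          have : i = 0 := by omega
          subst this
          exact hnv (loopValid_zero_one hi.2)
        have : i - 1 < k ∧ LoopValid m k (i-1+1) a := by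
          constructor
          · omega
          · have : i - 1 + 1 = i := by omega
            rw [this]; exact hi.2
        rw [if_pos this]; omega
      · have hik' : i = k := by omega
        subst hik'
        have : i - 1 < i ∧ LoopValid m i (i-1+1) a := by
          refine ⟨by omega, ?_⟩
          have : i - 1 + 1 = i := by omega
          rw [this]; exact hi.2
        rw [if_pos this]; omega

def loopConcat (m k i : ℕ) (hik : i ≤ k) (f : Fin i → Fin m) (g : Fin (k-i) → Fin m) :
    Fin k → Fin m :=
  fun j => if h : (j:ℕ) < i then f ⟨i-1-(j:ℕ), by omega⟩
           else g ⟨(j:ℕ)-i, by have := j.isLt; omega⟩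

lemma loopConcat_valid (m k i : ℕ) (hik : i ≤ k) (f : Fin i → Fin m) (g : Fin (k-i) → Fin m)
    (hf : StrictMono f) (hg : Monotone g) : LoopValid m k i (loopConcat m k i hik f g) := by
  constructor
  · intro j1 j2 h12 h2
    have h1 : (j1:ℕ) < i := by omega
    simp only [loopConcat, dif_pos h1, dif_pos h2]
    exact hf (show i-1-(j2:ℕ) < i-1-(j1:ℕ) by omega)
  · intro j1 j2 h1 h12
    have h1' : ¬ (j1:ℕ) < i := by omega
    have h2' : ¬ (j2:ℕ) < i := by have := Fin.le_def.mp h12; omega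
    simp only [loopConcat, dif_neg h1', dif_neg h2']
    exact hg (show ((j1:ℕ)-i) ≤ ((j2:ℕ)-i) by have := Fin.le_def.mp h12; omega)

lemma loopSplit_left_strictMono (m k i : ℕ) (hik : i ≤ k) (a : Fin k → Fin m)
    (h : LoopValid m k i a) :
    StrictMono (fun j : Fin i => a ⟨i-1-(j:ℕ), by have := j.isLt; omega⟩) := by
  intro j1 j2 h12
  exact h.1 ⟨i-1-(j2:ℕ), by have := j2.isLt; omega⟩ ⟨i-1-(j1:ℕ), by have := j1.isLt; omega⟩
    (show i-1-(j2:ℕ) < i-1-(j1:ℕ) by have := j2.isLt; have := Fin.lt_def.mp h12; omega)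
    (show i-1-(j1:ℕ) < i by have := j1.isLt; have := Fin.lt_def.mp h12; omega)

lemma loopSplit_right_monotone (m k i : ℕ) (hik : i ≤ k) (a : Fin k → Fin m)
    (h : LoopValid m k i a) :
    Monotone (fun j : Fin (k-i) => a ⟨i+(j:ℕ), by have := j.isLt; omega⟩) := by
  intro j1 j2 h12
  exact h.2 ⟨i+(j1:ℕ), by have := j1.isLt; omega⟩ ⟨i+(j2:ℕ), by have := j2.isLt; omega⟩
    (by simp) (Fin.le_def.mpr (by simpa using Fin.le_def.mp h12))

lemma loopConcat_split (m k i : ℕ) (hik : i ≤ k) (a : Fin k → Fin m) :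
    loopConcat m k i hik (fun j : Fin i => a ⟨i-1-(j:ℕ), by have := j.isLt; omega⟩)
      (fun j : Fin (k-i) => a ⟨i+(j:ℕ), by have := j.isLt; omega⟩) = a := by
  funext j
  by_cases h : (j:ℕ) < i
  · simp only [loopConcat, dif_pos h]
    congr 1
    exact Fin.ext (by simp; omega)
  · simp only [loopConcat, dif_neg h]
    congr 1
    exact Fin.ext (by simp; omega)

lemma loopSplit_concat_left (m k i : ℕ) (hik : i ≤ k) (f : Fin i → Fin m)
    (g : Fin (k-i) → Fin m) (j : Fin i) :
    loopConcat m k i hik f g ⟨i-1-(j:ℕ), by have := j.isLt; omega⟩ = f j := by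
  have h : (i-1-(j:ℕ)) < i := by have := j.isLt; omega
  simp only [loopConcat, dif_pos h]
  congr 1
  exact Fin.ext (by simp; have := j.isLt; omega)

lemma loopSplit_concat_right (m k i : ℕ) (hik : i ≤ k) (f : Fin i → Fin m)
    (g : Fin (k-i) → Fin m) (j : Fin (k-i)) :
    loopConcat m k i hik f g ⟨i+(j:ℕ), by have := j.isLt; omega⟩ = g j := by
  have h : ¬ (i+(j:ℕ)) < i := by omega
  simp only [loopConcat, dif_neg h]
  congr 1
  exact Fin.ext (by simp)

/-- the monomial product identity -/
lemma loopConcat_prod (n m k i : ℕ) (hik : i ≤ k) (r : ZMod n)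
    (f : Fin i → Fin m) (g : Fin (k-i) → Fin m) :
    (∏ j : Fin i, X (f j, (r - (i:ZMod n)) + ((j:ℕ) : ZMod n))) *
      (∏ j : Fin (k-i), X (g j, (r - (i:ZMod n) - 1) - ((j:ℕ) : ZMod n))) =
    ∏ j : Fin k, (X (loopConcat m k i hik f g j, r - 1 - ((j:ℕ) : ZMod n))
      : MvPolynomial (Fin m × ZMod n) ℤ) := by
  set N : ℕ → MvPolynomial (Fin m × ZMod n) ℤ := fun j =>
    if h : j < k then X (loopConcat m k i hik f g ⟨j, h⟩, r - 1 - ((j:ℕ) : ZMod n)) else 1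
    with hN
  have hR : ∏ j : Fin k, (X (loopConcat m k i hik f g j, r - 1 - ((j:ℕ) : ZMod n))
      : MvPolynomial (Fin m × ZMod n) ℤ) = ∏ j ∈ Finset.range k, N j := by
    rw [← Fin.prod_univ_eq_prod_range]
    refine Finset.prod_congr rfl fun j _ => ?_
    simp only [hN, dif_pos j.isLt, Fin.eta]
  have hsplit : ∏ j ∈ Finset.range k, N j
      = (∏ j ∈ Finset.range i, N j) * ∏ j ∈ Finset.range (k-i), N (i+j) := by
    have hk' : k = i + (k-i) := by omega
    calc ∏ j ∈ Finset.range k, N j = ∏ j ∈ Finset.range (i+(k-i)), N j := by rw [← hk']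
      _ = _ := Finset.prod_range_add _ _ _
  have hleft : ∏ j ∈ Finset.range i, N j
      = ∏ j : Fin i, (X (f j, (r - (i:ZMod n)) + ((j:ℕ) : ZMod n))
        : MvPolynomial (Fin m × ZMod n) ℤ) := by
    rw [← Finset.prod_range_reflect (fun j => N j) i, ← Fin.prod_univ_eq_prod_range]
    refine Finset.prod_congr rfl fun j _ => ?_
    have hj := j.isLt
    have h1 : i - 1 - (j:ℕ) < k := by omega
    have h2 : i - 1 - (j:ℕ) < i := by omega
    simp only [hN, dif_pos h1, loopConcat, dif_pos h2]
    have harg : (⟨i-1-(i-1-(j:ℕ)), by omega⟩ : Fin i) = j := Fin.ext (by simp; omega)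
    rw [harg]
    have hc : ((i-1-(j:ℕ) : ℕ) : ZMod n) = (i:ZMod n) - 1 - ((j:ℕ) : ZMod n) := by
      rw [Nat.cast_sub (by omega : (j:ℕ) ≤ i - 1), Nat.cast_sub (by omega : 1 ≤ i),
        Nat.cast_one]
    rw [hc]
    ring_nf
  have hright : ∏ j ∈ Finset.range (k-i), N (i+j)
      = ∏ j : Fin (k-i), (X (g j, (r - (i:ZMod n) - 1) - ((j:ℕ) : ZMod n))
        : MvPolynomial (Fin m × ZMod n) ℤ) := by
    rw [← Fin.prod_univ_eq_prod_range]
    refine Finset.prod_congr rfl fun j _ => ?_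
    have hj := j.isLt
    have h1 : i + (j:ℕ) < k := by omega
    have h2 : ¬ (i + (j:ℕ) < i) := by omega
    simp only [hN, dif_pos h1, loopConcat, dif_pos h2, dif_neg h2]
    have harg : (⟨i+(j:ℕ)-i, by omega⟩ : Fin (k-i)) = j := Fin.ext (by simp)
    rw [harg]
    have hc : ((i+(j:ℕ) : ℕ) : ZMod n) = (i:ZMod n) + ((j:ℕ) : ZMod n) := by push_cast; ring
    rw [hc]
    ring_nf
  rw [hR, hsplit, hleft, hright]

open Classical in
lemma loop_term_eq (n m k : ℕ) (i : ℕ) (hik : i ≤ k) (r : ZMod n) :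
    lE n m (i:ℤ) (r - (i:ZMod n)) * lH n m ((k-i:ℕ):ℤ) (r - (i:ZMod n) - 1) =
    ∑ a ∈ Finset.univ.filter (fun a : Fin k → Fin m => LoopValid m k i a),
      ∏ j : Fin k, X (a j, r - 1 - ((j:ℕ) : ZMod n)) := by
  rw [lE, lH, if_pos (Int.natCast_nonneg i), if_pos (Int.natCast_nonneg (k-i))]
  simp only [Int.toNat_natCast]
  rw [Finset.sum_mul_sum]
  rw [← Finset.sum_product']
  refine Finset.sum_nbij' (fun p => loopConcat m k i hik p.1 p.2)
    (fun a => (fun j : Fin i => a ⟨i-1-(j:ℕ), by have := j.isLt; omega⟩,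
               fun j : Fin (k-i) => a ⟨i+(j:ℕ), by have := j.isLt; omega⟩))
    ?_ ?_ ?_ ?_ ?_
  · intro p hp
    simp only [Finset.mem_product, Finset.mem_filter, Finset.mem_univ, true_and] at hp
    simp only [Finset.mem_filter, Finset.mem_univ, true_and]
    exact loopConcat_valid m k i hik p.1 p.2 hp.1 hp.2
  · intro a ha
    simp only [Finset.mem_filter, Finset.mem_univ, true_and] at ha
    simp only [Finset.mem_product, Finset.mem_filter, Finset.mem_univ, true_and]
    exact ⟨loopSplit_left_strictMono m k i hik a ha, loopSplit_right_monotone m k i hik a ha⟩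
  · intro p hp
    refine Prod.ext ?_ ?_
    · funext j
      exact loopSplit_concat_left m k i hik p.1 p.2 j
    · funext j
      exact loopSplit_concat_right m k i hik p.1 p.2 j
  · intro a ha
    exact loopConcat_split m k i hik a
  · intro p hp
    exact loopConcat_prod n m k i hik r p.1 p.2

/-- for `k ≥ 1` the alternating sum
`Σ_{i=0}^{k} (−1)^i e_i^{(r−i)} h_{k−i}^{(r−i−1)}` vanishes. -/
theorem loop_eh_alternating_sum (n m k : ℕ) (hn : 1 < n) (hm : 1 ≤ m) (hk : 1 ≤ k)
    (r : ZMod n) :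
    ∑ i ∈ Finset.range (k + 1),
      (-1 : MvPolynomial (Fin m × ZMod n) ℤ) ^ i *
        lE n m (i : ℤ) (r - (i : ZMod n)) *
        lH n m ((k - i : ℕ) : ℤ) (r - (i : ZMod n) - 1) = 0 := by
  classical
  have hterm : ∀ i ∈ Finset.range (k+1),
      (-1 : MvPolynomial (Fin m × ZMod n) ℤ) ^ i *
        lE n m (i : ℤ) (r - (i : ZMod n)) *
        lH n m ((k - i : ℕ) : ℤ) (r - (i : ZMod n) - 1)
      = ∑ a ∈ Finset.univ.filter (fun a : Fin k → Fin m => LoopValid m k i a),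
          (-1 : MvPolynomial (Fin m × ZMod n) ℤ) ^ i *
            ∏ j : Fin k, X (a j, r - 1 - ((j:ℕ) : ZMod n)) := by
    intro i hi
    simp only [Finset.mem_range] at hi
    rw [mul_assoc, loop_term_eq n m k i (by omega) r, Finset.mul_sum]
  rw [Finset.sum_congr rfl hterm]
  have hfilt : ∀ i ∈ Finset.range (k+1),
      (∑ a ∈ Finset.univ.filter (fun a : Fin k → Fin m => LoopValid m k i a),
        (-1 : MvPolynomial (Fin m × ZMod n) ℤ) ^ i *
          ∏ j : Fin k, X (a j, r - 1 - ((j:ℕ) : ZMod n)))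
      = ∑ a : Fin k → Fin m, if LoopValid m k i a then
          (-1 : MvPolynomial (Fin m × ZMod n) ℤ) ^ i *
            ∏ j : Fin k, X (a j, r - 1 - ((j:ℕ) : ZMod n)) else 0 := by
    intro i _
    rw [Finset.sum_filter]
  rw [Finset.sum_congr rfl hfilt, Finset.sum_comm]
  refine Finset.sum_eq_zero fun a _ => ?_
  have : ∑ i ∈ Finset.range (k+1), (if LoopValid m k i a then
      (-1 : MvPolynomial (Fin m × ZMod n) ℤ) ^ i *
        ∏ j : Fin k, X (a j, r - 1 - ((j:ℕ) : ZMod n)) else 0)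
      = (∑ i ∈ (Finset.range (k+1)).filter (fun i => LoopValid m k i a),
          (-1 : MvPolynomial (Fin m × ZMod n) ℤ) ^ i) *
        ∏ j : Fin k, X (a j, r - 1 - ((j:ℕ) : ZMod n)) := by
    rw [Finset.sum_mul, ← Finset.sum_filter]
  rw [this, loopValid_sign_sum m k hk a, zero_mul]

end
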